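/- In a DGLA, assume δX_k = −Σ_{j=1}^k [B_j, X_{k−j}] for 0 ≤ k ≤ n (where the empty sum for k=0 means δX₀ = 0), and δB_k = −(1/2) Σ_{i=1}^{k−1} [B_i, B_{k−i}] for all k ≥ 1, with X_r of shifted degree 0 and B_p of shifted degree 1. Then δ(Σ_{k=1}^{n+1} [B_k, X_{n+1−k}]) = 0. -/
import Mathlib


/-- A differential graded Lie algebra structure on a `ℚ`-vector space `V`:
a grading by submodules `G i`, a bilinear bracket `br` and a degree `+1`
differential `d`, satisfying graded skew-symmetry, the graded Jacobi identity
and the graded Leibniz rule (signs computed from the degrees of homogeneous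
elements). -/
structure DGLA (V : Type*) [AddCommGroup V] [Module ℚ V] where
  /-- the grading -/
  G : ℤ → Submodule ℚ V
  /-- the graded Lie bracket -/
  br : V →ₗ[ℚ] V →ₗ[ℚ] V
  /-- the differential -/
  d : V →ₗ[ℚ] V
  supr_top : ⨆ i, G i = ⊤
  br_mem : ∀ {p q : ℤ} {x y : V}, x ∈ G p → y ∈ G q → br x y ∈ G (p + q)
  d_mem : ∀ {p : ℤ} {x : V}, x ∈ G p → d x ∈ G (p + 1)
  d_sq : ∀ x : V, d (d x) = 0
  skew : ∀ {p q : ℤ} {x y : V}, x ∈ G p → y ∈ G q →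
    br x y = -(((-1 : ℚ) ^ (p * q)) • br y x)
  jacobi : ∀ {p q r : ℤ} {x y z : V}, x ∈ G p → y ∈ G q → z ∈ G r →
    br x (br y z) = br (br x y) z + ((-1 : ℚ) ^ (p * q)) • br y (br x z)
  leibniz : ∀ {p : ℤ} {x : V}, x ∈ G p → ∀ y : V,
    d (br x y) = br (d x) y + ((-1 : ℚ) ^ p) • br x (d y)

/-- Reindexing a triangular double sum: pairs `(i, k - i)` with
`1 ≤ i ≤ k - 1 ≤ N - 1` correspond to pairs `(k, j)` with `k, j ≥ 1`,
`k + j ≤ N`. -/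
lemma reindex_tri_sum {M : Type*} [AddCommMonoid M] (N : ℕ) (f : ℕ → ℕ → M) :
    ∑ k ∈ Finset.Icc 1 N, ∑ i ∈ Finset.Icc 1 (k - 1), f i (k - i)
    = ∑ k ∈ Finset.Icc 1 N, ∑ j ∈ Finset.Icc 1 (N - k), f k j := by
  rw [Finset.sum_sigma', Finset.sum_sigma']
  apply Finset.sum_nbij' (i := fun p => (⟨p.2, p.1 - p.2⟩ : Σ _ : ℕ, ℕ))
    (j := fun p => (⟨p.1 + p.2, p.1⟩ : Σ _ : ℕ, ℕ))
  · intro a ha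
    simp only [Finset.mem_sigma, Finset.mem_Icc] at *
    omega
  · intro a ha
    simp only [Finset.mem_sigma, Finset.mem_Icc] at *
    omega
  · rintro ⟨x, y⟩ ha
    simp only [Finset.mem_sigma, Finset.mem_Icc] at ha
    simp only [Sigma.mk.inj_iff, heq_eq_eq]
    refine ⟨?_, ?_⟩ <;> first | trivial | omega
  · rintro ⟨x, y⟩ ha
    simp only [Finset.mem_sigma, Finset.mem_Icc] at ha
    simp only [Sigma.mk.inj_iff, heq_eq_eq]
    refine ⟨?_, ?_⟩ <;> first | trivial | omega
  · intro a ha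
    rfl

/-- Swapping the two indices in a triangular double sum. -/
lemma swap_tri_sum {M : Type*} [AddCommMonoid M] (N : ℕ) (g : ℕ → ℕ → M) :
    ∑ k ∈ Finset.Icc 1 N, ∑ j ∈ Finset.Icc 1 (N - k), g k j
    = ∑ k ∈ Finset.Icc 1 N, ∑ j ∈ Finset.Icc 1 (N - k), g j k := by
  rw [Finset.sum_sigma', Finset.sum_sigma']
  apply Finset.sum_nbij' (i := fun p => (⟨p.2, p.1⟩ : Σ _ : ℕ, ℕ))
    (j := fun p => (⟨p.2, p.1⟩ : Σ _ : ℕ, ℕ))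
  · intro a ha
    simp only [Finset.mem_sigma, Finset.mem_Icc] at *
    omega
  · intro a ha
    simp only [Finset.mem_sigma, Finset.mem_Icc] at *
    omega
  · intro a _; rfl
  · intro a _; rfl
  · intro a ha; rfl

/-- In a DGLA, assume `δX_k = −Σ_{j=1}^k [B_j, X_{k−j}]` for `0 ≤ k ≤ n` and
`δB_k = −(1/2) Σ_{i=1}^{k−1} [B_i, B_{k−i}]` for all `k ≥ 1`, with the `X`'s of
shifted degree 0 and the `B`'s of shifted degree 1.  Then the obstruction
`Σ_{k=1}^{n+1} [B_k, X_{n+1−k}]` is a cocycle. -/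
theorem general_obstruction_is_cocycle {V : Type*} [AddCommGroup V] [Module ℚ V]
    (L : DGLA V) (B X : ℕ → V) (n : ℕ)
    (hB : ∀ k, B k ∈ L.G 1) (hX : ∀ k, X k ∈ L.G 0)
    (hdX : ∀ k ≤ n, L.d (X k) = -∑ j ∈ Finset.Icc 1 k, L.br (B j) (X (k - j)))
    (hdB : ∀ k, 1 ≤ k →
      L.d (B k) = -((1/2 : ℚ) • ∑ i ∈ Finset.Icc 1 (k - 1), L.br (B i) (B (k - i)))) :
    L.d (∑ k ∈ Finset.Icc 1 (n + 1), L.br (B k) (X (n + 1 - k))) = 0 := by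
  have hT : True := trivial
  set T : V := ∑ k ∈ Finset.Icc 1 (n + 1), ∑ j ∈ Finset.Icc 1 (n + 1 - k),
    L.br (L.br (B k) (B j)) (X (n + 1 - k - j)) with hTdef
  set S : V := ∑ k ∈ Finset.Icc 1 (n + 1), ∑ j ∈ Finset.Icc 1 (n + 1 - k),
    L.br (B k) (L.br (B j) (X (n + 1 - k - j))) with hSdef
  -- the first double sum reindexes to T
  have hA : (∑ k ∈ Finset.Icc 1 (n + 1), ∑ i ∈ Finset.Icc 1 (k - 1),
      L.br (L.br (B i) (B (k - i))) (X (n + 1 - k))) = T := by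
    rw [hTdef,
      ← reindex_tri_sum (n + 1) (fun a b => L.br (L.br (B a) (B b)) (X (n + 1 - a - b)))]
    refine Finset.sum_congr rfl fun k hk => Finset.sum_congr rfl fun i hi => ?_
    simp only [Finset.mem_Icc] at hk hi
    have h : n + 1 - k = n + 1 - i - (k - i) := by omega
    rw [h]
  -- Step 1: compute the differential of each summand and collect
  have hstep : L.d (∑ k ∈ Finset.Icc 1 (n + 1), L.br (B k) (X (n + 1 - k)))
      = -((1/2 : ℚ) • T) + S := by
    rw [map_sum]
    have hterm : ∀ k ∈ Finset.Icc 1 (n + 1),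
        L.d (L.br (B k) (X (n + 1 - k)))
        = -((1/2 : ℚ) • ∑ i ∈ Finset.Icc 1 (k - 1),
            L.br (L.br (B i) (B (k - i))) (X (n + 1 - k)))
          + ∑ j ∈ Finset.Icc 1 (n + 1 - k),
            L.br (B k) (L.br (B j) (X (n + 1 - k - j))) := by
      intro k hk
      simp only [Finset.mem_Icc] at hk
      rw [L.leibniz (hB k) (X (n + 1 - k)), hdB k hk.1, hdX (n + 1 - k) (by omega)]
      have h1 : ((-1 : ℚ) ^ (1 : ℤ)) = -1 := by norm_num
      rw [h1]
      simp only [map_neg, map_smul, map_sum, LinearMap.neg_apply, LinearMap.smul_apply,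
        LinearMap.sum_apply, neg_smul, one_smul, neg_neg]
    rw [Finset.sum_congr rfl hterm, Finset.sum_add_distrib]
    rw [Finset.sum_neg_distrib, ← Finset.smul_sum, hA, hSdef]
  -- Step 2: symmetrize S via Jacobi
  have hswap : S = ∑ k ∈ Finset.Icc 1 (n + 1), ∑ j ∈ Finset.Icc 1 (n + 1 - k),
      L.br (B j) (L.br (B k) (X (n + 1 - k - j))) := by
    rw [hSdef,
      swap_tri_sum (n + 1) (fun a b => L.br (B a) (L.br (B b) (X (n + 1 - a - b))))]
    refine Finset.sum_congr rfl fun k hk => Finset.sum_congr rfl fun j hj => ?_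
    simp only [Finset.mem_Icc] at hk hj
    have h : n + 1 - j - k = n + 1 - k - j := by omega
    rw [h]
  have hSS : S + S = T := by
    nth_rewrite 2 [hswap]
    rw [hSdef, hTdef, ← Finset.sum_add_distrib]
    refine Finset.sum_congr rfl fun k hk => ?_
    rw [← Finset.sum_add_distrib]
    refine Finset.sum_congr rfl fun j hj => ?_
    rw [L.jacobi (hB k) (hB j) (hX (n + 1 - k - j))]
    have h1 : ((-1 : ℚ) ^ ((1 : ℤ) * 1)) = -1 := by norm_num
    rw [h1]
    module
  rw [hstep, ← hSS]
  module
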